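/- If P and Q are finite posets on d elements having a common linear extension, then the Ehrhart polynomials of Ω(O_P, O_Q), Ω(O_P, C_Q), and Ω(C_P, C_Q) coincide. -/

import Mathlib

open scoped Pointwise
open Finset


def orderPolytope {d : ℕ} (r : Fin d → Fin d → Prop) : Set (Fin d → ℝ) :=
  {x | (∀ i, 0 ≤ x i ∧ x i ≤ 1) ∧ ∀ i j, r i j → x j ≤ x i}

def chainPolytope {d : ℕ} (r : Fin d → Fin d → Prop) : Set (Fin d → ℝ) :=
  {x | (∀ i, 0 ≤ x i) ∧
    ∀ c : Finset (Fin d), IsMaxChain r (c : Set (Fin d)) → ∑ i ∈ c, x i ≤ 1}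

def OmegaPoly {d : ℕ} (A B : Set (Fin d → ℝ)) : Set (Fin (d + 1) → ℝ) :=
  convexHull ℝ
    (((fun x => Fin.snoc x (1 : ℝ)) '' A) ∪ ((fun x => Fin.snoc (-x) (-1 : ℝ)) '' B))

/-- The Ehrhart counting function: the number of lattice points of `n𝒫`. -/
noncomputable def ehrhart {m : ℕ} (S : Set (Fin m → ℝ)) (n : ℕ) : ℕ :=
  Set.ncard {a : Fin m → ℤ | (fun i => (a i : ℝ)) ∈ (n : ℝ) • S}

namespace OmegaProof

variable {d : ℕ}

/-- max with 0 of `f` over `s`. -/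
noncomputable def fmax {α : Type*} (s : Finset α) (f : α → ℤ) : ℤ := s.fold max 0 f

lemma fmax_nonneg {α : Type*} (s : Finset α) (f : α → ℤ) : 0 ≤ fmax s f := by
  classical
  induction s using Finset.induction_on with
  | empty => simp [fmax]
  | insert _ _ h ih => rw [fmax, Finset.fold_insert h]; exact le_max_of_le_right ih

lemma le_fmax {α : Type*} {s : Finset α} (f : α → ℤ) {a : α} (ha : a ∈ s) : f a ≤ fmax s f := by
  rw [fmax, le_fold_max]; exact Or.inr ⟨a, ha, le_rfl⟩

lemma fmax_le {α : Type*} {s : Finset α} {f : α → ℤ} {z : ℤ} (h0 : 0 ≤ z)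
    (h : ∀ a ∈ s, f a ≤ z) : fmax s f ≤ z := by
  rw [fmax, fold_max_le]; exact ⟨h0, h⟩

lemma fmax_cases {α : Type*} (s : Finset α) (f : α → ℤ) :
    fmax s f = 0 ∨ ∃ a ∈ s, fmax s f = f a := by
  classical
  induction s using Finset.induction_on with
  | empty => simp [fmax]
  | @insert a s h ih =>
    rw [fmax, Finset.fold_insert h]
    rcases le_or_gt (f a) (s.fold max 0 f) with hle | hlt
    · rw [max_eq_right hle]
      rcases ih with h0 | ⟨b, hb, he⟩
      · exact Or.inl h0
      · exact Or.inr ⟨b, mem_insert_of_mem hb, he⟩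
    · rw [max_eq_left hlt.le]; exact Or.inr ⟨a, mem_insert_self _ _, rfl⟩

lemma fmax_congr {α : Type*} {s : Finset α} {f g : α → ℤ} (h : ∀ a ∈ s, f a = g a) :
    fmax s f = fmax s g := Finset.fold_congr h

lemma fmax_attach {α : Type*} (s : Finset α) (f : α → ℤ) :
    fmax s.attach (fun j => f j.1) = fmax s f := by
  conv_rhs => rw [← Finset.attach_map_val (s := s)]
  rw [fmax, fmax, Finset.fold_map]
  rfl

/-- subsets with bigger ρ-rank shrink: termination measure. -/
lemma card_above_lt (ρ : Fin d → ℕ) {i j : Fin d} (h : ρ i < ρ j) :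
    (Finset.univ.filter fun k => ρ j < ρ k).card <
      (Finset.univ.filter fun k => ρ i < ρ k).card := by
  apply Finset.card_lt_card
  constructor
  · intro k hk
    simp only [Finset.mem_filter, Finset.mem_univ, true_and] at hk ⊢
    exact h.trans hk
  · intro hsub
    have := hsub (by simp [h] : j ∈ Finset.univ.filter fun k => ρ i < ρ k)
    simp at this

open Classical in
/-- the set of elements strictly above `i` for a relation. -/
noncomputable def aboveSet (lt : Fin d → Fin d → Prop) (i : Fin d) : Finset (Fin d) :=
  Finset.univ.filter (lt i ·)

lemma mem_aboveSet {lt : Fin d → Fin d → Prop} {i j : Fin d} :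
    j ∈ aboveSet lt i ↔ lt i j := by
  classical
  simp [aboveSet]

open Classical in
/-- canonical minimal `v` with `v` in the `slt`-cone and `y + v` in the `rlt`-cone. -/
noncomputable def vcan (ρ : Fin d → ℕ) (rlt slt : Fin d → Fin d → Prop)
    (hR : ∀ i j, rlt i j → ρ i < ρ j) (hS : ∀ i j, slt i j → ρ i < ρ j)
    (y : Fin d → ℤ) (i : Fin d) : ℤ :=
  max (max 0 (-(y i)))
    (max
      (fmax (aboveSet slt i).attach (fun j => vcan ρ rlt slt hR hS y j.1))
      (fmax (aboveSet rlt i).attach (fun j => y j.1 + vcan ρ rlt slt hR hS y j.1 - y i)))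
  termination_by (Finset.univ.filter fun k => ρ i < ρ k).card
  decreasing_by
  · exact card_above_lt ρ (hS _ _ (mem_aboveSet.mp j.2))
  · exact card_above_lt ρ (hR _ _ (mem_aboveSet.mp j.2))

lemma vcan_eq (ρ : Fin d → ℕ) (rlt slt : Fin d → Fin d → Prop)
    (hR : ∀ i j, rlt i j → ρ i < ρ j) (hS : ∀ i j, slt i j → ρ i < ρ j)
    (y : Fin d → ℤ) (i : Fin d) :
    vcan ρ rlt slt hR hS y i =
      max (max 0 (-(y i)))
        (max
          (fmax (aboveSet slt i) (vcan ρ rlt slt hR hS y))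
          (fmax (aboveSet rlt i) (fun j => y j + vcan ρ rlt slt hR hS y j - y i))) := by
  rw [vcan, fmax_attach,
    fmax_attach (aboveSet rlt i) (fun j => y j + vcan ρ rlt slt hR hS y j - y i)]


section VC
variable {d : ℕ} (ρ : Fin d → ℕ) {rlt slt : Fin d → Fin d → Prop}
  (hR : ∀ i j, rlt i j → ρ i < ρ j) (hS : ∀ i j, slt i j → ρ i < ρ j)

lemma rank_induction (Pr : Fin d → Prop)
    (h : ∀ i, (∀ j, ρ i < ρ j → Pr j) → Pr i) : ∀ i, Pr i := by
  have key : ∀ N i, (Finset.univ.filter fun k => ρ i < ρ k).card < N → Pr i := by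
    intro N
    induction N with
    | zero => intro i hi; omega
    | succ N ih =>
      intro i hi
      apply h
      intro j hj
      exact ih j (by have := card_above_lt ρ hj; omega)
  intro i
  exact key _ i (Nat.lt_succ_self _)

variable (y : Fin d → ℤ)

lemma vcan_nonneg (i : Fin d) : 0 ≤ vcan ρ rlt slt hR hS y i := by
  rw [vcan_eq]; exact le_max_of_le_left (le_max_left _ _)

lemma vcan_ge_neg (i : Fin d) : -(y i) ≤ vcan ρ rlt slt hR hS y i := by
  rw [vcan_eq]; exact le_max_of_le_left (le_max_right _ _)

lemma vcan_coneS {i j : Fin d} (h : slt i j) :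
    vcan ρ rlt slt hR hS y j ≤ vcan ρ rlt slt hR hS y i := by
  conv_rhs => rw [vcan_eq]
  exact le_max_of_le_right (le_max_of_le_left (le_fmax _ (mem_aboveSet.mpr h)))

lemma vcan_coneR {i j : Fin d} (h : rlt i j) :
    y j + vcan ρ rlt slt hR hS y j - y i ≤ vcan ρ rlt slt hR hS y i := by
  conv_rhs => rw [vcan_eq]
  exact le_max_of_le_right (le_max_of_le_right
    (le_fmax (fun j => y j + vcan ρ rlt slt hR hS y j - y i) (mem_aboveSet.mpr h)))

lemma vcan_tight (i : Fin d) :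
    vcan ρ rlt slt hR hS y i = 0 ∨ vcan ρ rlt slt hR hS y i = -(y i) ∨
      (∃ j, slt i j ∧ vcan ρ rlt slt hR hS y i = vcan ρ rlt slt hR hS y j) ∨
      (∃ j, rlt i j ∧ vcan ρ rlt slt hR hS y i = y j + vcan ρ rlt slt hR hS y j - y i) := by
  set v := vcan ρ rlt slt hR hS y with hv
  have he : v i = max (max 0 (-(y i))) (max (fmax (aboveSet slt i) v)
      (fmax (aboveSet rlt i) (fun j => y j + v j - y i))) := vcan_eq ρ rlt slt hR hS y i
  rcases max_cases (max 0 (-(y i))) (max (fmax (aboveSet slt i) v)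
      (fmax (aboveSet rlt i) (fun j => y j + v j - y i))) with ⟨h1, _⟩ | ⟨h1, _⟩
  · rw [h1] at he
    rcases max_cases (0 : ℤ) (-(y i)) with ⟨h2, _⟩ | ⟨h2, _⟩
    · rw [h2] at he; exact Or.inl he
    · rw [h2] at he; exact Or.inr (Or.inl he)
  · rw [h1] at he
    rcases max_cases (fmax (aboveSet slt i) v)
        (fmax (aboveSet rlt i) (fun j => y j + v j - y i)) with ⟨h2, _⟩ | ⟨h2, _⟩
    · rw [h2] at he
      rcases fmax_cases (aboveSet slt i) v with h3 | ⟨j, hj, h3⟩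
      · rw [h3] at he; exact Or.inl he
      · rw [h3] at he; exact Or.inr (Or.inr (Or.inl ⟨j, mem_aboveSet.mp hj, he⟩))
    · rw [h2] at he
      rcases fmax_cases (aboveSet rlt i) (fun j => y j + v j - y i) with h3 | ⟨j, hj, h3⟩
      · rw [h3] at he; exact Or.inl he
      · rw [h3] at he; exact Or.inr (Or.inr (Or.inr ⟨j, mem_aboveSet.mp hj, he⟩))

/-- minimality of `vcan` among real feasible vectors -/
lemma vcan_min (w : Fin d → ℝ) (hw0 : ∀ i, 0 ≤ w i)
    (hwS : ∀ i j, slt i j → w j ≤ w i)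
    (hyw0 : ∀ i, 0 ≤ (y i : ℝ) + w i)
    (hywR : ∀ i j, rlt i j → (y j : ℝ) + w j ≤ (y i : ℝ) + w i) :
    ∀ i, (vcan ρ rlt slt hR hS y i : ℝ) ≤ w i := by
  apply rank_induction ρ
  intro i ih
  rcases vcan_tight ρ hR hS y i with h | h | ⟨j, hj, h⟩ | ⟨j, hj, h⟩
  · rw [h]; exact_mod_cast hw0 i
  · rw [h]; push_cast; linarith [hyw0 i]
  · rw [h]
    exact le_trans (ih j (hS _ _ hj)) (hwS _ _ hj)
  · rw [h]; push_cast
    have := ih j (hR _ _ hj)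
    have := hywR _ _ hj
    linarith

/-- any feasible and everywhere-tight vector equals `vcan`. -/
lemma vcan_unique (v : Fin d → ℤ) (hv0 : ∀ i, 0 ≤ v i)
    (hvy : ∀ i, -(y i) ≤ v i)
    (hvS : ∀ i j, slt i j → v j ≤ v i)
    (hvR : ∀ i j, rlt i j → y j + v j - y i ≤ v i)
    (ht : ∀ i, v i = 0 ∨ v i = -(y i) ∨ (∃ j, slt i j ∧ v i = v j) ∨
      (∃ j, rlt i j ∧ v i = y j + v j - y i)) :
    ∀ i, v i = vcan ρ rlt slt hR hS y i := by
  apply rank_induction ρ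
  intro i ih
  have h1 : vcan ρ rlt slt hR hS y i ≤ v i := by
    rcases vcan_tight ρ hR hS y i with h | h | ⟨j, hj, h⟩ | ⟨j, hj, h⟩
    · rw [h]; exact hv0 i
    · rw [h]; exact hvy i
    · rw [h, ← ih j (hS _ _ hj)]; exact hvS _ _ hj
    · rw [h, ← ih j (hR _ _ hj)]; exact hvR _ _ hj
  have h2 : v i ≤ vcan ρ rlt slt hR hS y i := by
    rcases ht i with h | h | ⟨j, hj, h⟩ | ⟨j, hj, h⟩
    · rw [h]; exact vcan_nonneg ρ hR hS y i
    · rw [h]; exact vcan_ge_neg ρ hR hS y i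
    · rw [h, ih j (hS _ _ hj)]; exact vcan_coneS ρ hR hS y hj
    · rw [h, ih j (hR _ _ hj)]; exact vcan_coneR ρ hR hS y hj
  omega

end VC
section Transfer
variable {d : ℕ} (ρ : Fin d → ℕ)

/-- transfer map -/
noncomputable def tmap (slt : Fin d → Fin d → Prop) (v : Fin d → ℤ) : Fin d → ℤ :=
  fun i => v i - fmax (aboveSet slt i) v

open Classical in
/-- inverse transfer map -/
noncomputable def rmap (slt : Fin d → Fin d → Prop)
    (hS : ∀ i j, slt i j → ρ i < ρ j) (w : Fin d → ℤ) (i : Fin d) : ℤ :=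
  w i + fmax (aboveSet slt i).attach (fun j => rmap slt hS w j.1)
  termination_by (Finset.univ.filter fun k => ρ i < ρ k).card
  decreasing_by exact card_above_lt ρ (hS _ _ (mem_aboveSet.mp j.2))

variable {slt : Fin d → Fin d → Prop} (hS : ∀ i j, slt i j → ρ i < ρ j)

lemma rmap_eq (w : Fin d → ℤ) (i : Fin d) :
    rmap ρ slt hS w i = w i + fmax (aboveSet slt i) (rmap ρ slt hS w) := by
  rw [rmap, fmax_attach]

variable {v w : Fin d → ℤ}

lemma fmax_above_le (hv0 : ∀ i, 0 ≤ v i) (hvc : ∀ i j, slt i j → v j ≤ v i) (i : Fin d) :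
    fmax (aboveSet slt i) v ≤ v i :=
  fmax_le (hv0 i) (fun j hj => hvc _ _ (mem_aboveSet.mp hj))

lemma tmap_nonneg (hv0 : ∀ i, 0 ≤ v i) (hvc : ∀ i j, slt i j → v j ≤ v i) (i : Fin d) :
    0 ≤ tmap slt v i :=
  sub_nonneg.mpr (fmax_above_le hv0 hvc i)

lemma tmap_le (i : Fin d) : tmap slt v i ≤ v i :=
  sub_le_self _ (fmax_nonneg _ _)

lemma rmap_nonneg (hw : ∀ i, 0 ≤ w i) (i : Fin d) : 0 ≤ rmap ρ slt hS w i := by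
  rw [rmap_eq]
  have := fmax_nonneg (aboveSet slt i) (rmap ρ slt hS w)
  linarith [hw i]

lemma rmap_cone (hw : ∀ i, 0 ≤ w i) {i j : Fin d} (h : slt i j) :
    rmap ρ slt hS w j ≤ rmap ρ slt hS w i := by
  conv_rhs => rw [rmap_eq]
  have h1 : rmap ρ slt hS w j ≤ fmax (aboveSet slt i) (rmap ρ slt hS w) :=
    le_fmax _ (mem_aboveSet.mpr h)
  linarith [hw i]

lemma tmap_rmap (i : Fin d) : tmap slt (rmap ρ slt hS w) i = w i := by
  rw [tmap, rmap_eq]; ring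

lemma rmap_tmap (hv0 : ∀ i, 0 ≤ v i) (hvc : ∀ i j, slt i j → v j ≤ v i) :
    ∀ i, rmap ρ slt hS (tmap slt v) i = v i := by
  apply rank_induction ρ
  intro i ih
  rw [rmap_eq, tmap]
  have : fmax (aboveSet slt i) (rmap ρ slt hS (tmap slt v)) = fmax (aboveSet slt i) v :=
    fmax_congr (fun j hj => ih j (hS _ _ (mem_aboveSet.mp hj)))
  rw [this]; ring

end Transfer

section Chains
variable {d : ℕ} (ρ : Fin d → ℕ) (S : PartialOrder (Fin d))
  (hS : ∀ i j, S.lt i j → ρ i < ρ j) {v : Fin d → ℤ}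
  (hv0 : ∀ i, 0 ≤ v i) (hvc : ∀ i j, S.lt i j → v j ≤ v i)

include hS in
lemma sum_tmap_le_min :
    ∀ (c : Finset (Fin d)), IsChain S.le (c : Set (Fin d)) →
      ∀ i0 ∈ c, (∀ j ∈ c, ρ i0 ≤ ρ j) → ∑ j ∈ c, tmap S.lt v j ≤ v i0 := by
  have key : ∀ (N : ℕ) (c : Finset (Fin d)), c.card ≤ N → IsChain S.le (c : Set (Fin d)) →
      ∀ i0 ∈ c, (∀ j ∈ c, ρ i0 ≤ ρ j) → ∑ j ∈ c, tmap S.lt v j ≤ v i0 := by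
    intro N
    induction N with
    | zero =>
      intro c hcard _ i0 hi0 _
      interval_cases h : c.card
      · exact absurd hi0 (by simp [Finset.card_eq_zero.mp h])
    | succ N ih =>
      intro c hcard hchain i0 hi0 hmin
      rw [← Finset.add_sum_erase _ _ hi0]
      set c' := c.erase i0 with hc'
      rcases c'.eq_empty_or_nonempty with he | hne
      · rw [he]; simp only [Finset.sum_empty, add_zero]; exact tmap_le i0
      · obtain ⟨i1, hi1, hmin1⟩ := c'.exists_min_image ρ hne
        have hi1c : i1 ∈ c := Finset.mem_of_mem_erase hi1
        have hne1 : i1 ≠ i0 := Finset.ne_of_mem_erase hi1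
        have hlt : S.lt i0 i1 := by
          rcases hchain (by exact_mod_cast hi0) (by exact_mod_cast hi1c) hne1.symm with h | h
          · exact lt_of_le_of_ne h hne1.symm
          · exact absurd (hS _ _ (lt_of_le_of_ne h hne1)) (by
              have := hmin i1 hi1c; omega)
        have hcc : c'.card ≤ N := by
          rw [hc', Finset.card_erase_of_mem hi0]; omega
        have hsum : ∑ j ∈ c', tmap S.lt v j ≤ v i1 :=
          ih c' hcc (hchain.mono (by exact_mod_cast Finset.erase_subset _ _)) i1 hi1 hmin1
        have hfm : v i1 ≤ fmax (aboveSet S.lt i0) v := le_fmax _ (mem_aboveSet.mpr hlt)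
        have : tmap S.lt v i0 = v i0 - fmax (aboveSet S.lt i0) v := rfl
        omega
  intro c hc i0 hi0 hm
  exact key c.card c le_rfl hc i0 hi0 hm

include hS in
lemma sum_tmap_le_of_chain {m : ℤ} (hm : 0 ≤ m) (hvm : ∀ i, v i ≤ m)
    (c : Finset (Fin d)) (hc : IsChain S.le (c : Set (Fin d))) :
    ∑ j ∈ c, tmap S.lt v j ≤ m := by
  rcases c.eq_empty_or_nonempty with he | hne
  · rw [he]; simpa using hm
  · obtain ⟨i0, hi0, hmin⟩ := c.exists_min_image ρ hne
    exact le_trans (sum_tmap_le_min ρ S hS c hc i0 hi0 hmin) (hvm i0)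

include hS in
lemma exists_chain_sum_ge :
    ∀ i, ∃ c : Finset (Fin d), IsChain S.le (c : Set (Fin d)) ∧
      v i ≤ ∑ j ∈ c, tmap S.lt v j ∧ (∀ j ∈ c, S.le i j) := by
  apply rank_induction ρ
  intro i ih
  rcases fmax_cases (aboveSet S.lt i) v with h0 | ⟨j, hj, hjs⟩
  · refine ⟨{i}, ?_, ?_, ?_⟩
    · simp only [Finset.coe_singleton]; exact Set.Subsingleton.isChain (by simp)
    · simp only [Finset.sum_singleton, tmap, h0]; omega
    · intro j hj; simp only [Finset.mem_singleton] at hj; exact hj ▸ le_refl i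
  · have hlt : S.lt i j := mem_aboveSet.mp hj
    obtain ⟨c', hc', hsum', hle'⟩ := ih j (hS _ _ hlt)
    have hinotin : i ∉ c' := by
      intro hmem
      exact absurd (S.le_antisymm _ _ hlt.le (hle' i hmem)) hlt.ne
    refine ⟨insert i c', ?_, ?_, ?_⟩
    · rw [Finset.coe_insert]
      apply hc'.insert
      intro k hk _
      exact Or.inl (hlt.le.trans (hle' k (by exact_mod_cast hk)))
    · rw [Finset.sum_insert hinotin]
      have : tmap S.lt v i = v i - fmax (aboveSet S.lt i) v := rfl
      have hjv : v j ≤ ∑ j ∈ c', tmap S.lt v j := hsum'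
      omega
    · intro k hk
      rcases Finset.mem_insert.mp hk with h | h
      · exact h ▸ le_refl i
      · exact hlt.le.trans (hle' k h)

lemma exists_maxChain_finset (c : Finset (Fin d)) (hc : IsChain S.le (c : Set (Fin d))) :
    ∃ t : Finset (Fin d), IsMaxChain S.le (t : Set (Fin d)) ∧ c ⊆ t := by
  obtain ⟨M, hM, hsub⟩ := hc.exists_maxChain
  have hfin : M.Finite := Set.toFinite M
  refine ⟨hfin.toFinset, by rwa [Set.Finite.coe_toFinset], ?_⟩
  intro x hx
  rw [Set.Finite.mem_toFinset]
  exact hsub (by exact_mod_cast hx)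

include hS hv0 hvc in
lemma le_of_maxchain_sums {m : ℤ}
    (h : ∀ t : Finset (Fin d), IsMaxChain S.le (t : Set (Fin d)) →
      ∑ j ∈ t, tmap S.lt v j ≤ m) : ∀ i, v i ≤ m := by
  intro i
  obtain ⟨c, hc, hsum, _⟩ := exists_chain_sum_ge ρ S hS i
  obtain ⟨t, ht, hct⟩ := exists_maxChain_finset S c hc
  calc v i ≤ ∑ j ∈ c, tmap S.lt v j := hsum
    _ ≤ ∑ j ∈ t, tmap S.lt v j := Finset.sum_le_sum_of_subset_of_nonneg hct
        (fun j _ _ => tmap_nonneg hv0 hvc j)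
    _ ≤ m := h t ht

include hS hv0 hvc in
/-- key equivalence: order upper bounds on `v` ↔ chain upper bounds on `tmap v`. -/
lemma ub_transfer {m : ℤ} (hm : 0 ≤ m) :
    (∀ i, v i ≤ m) ↔ (∀ t : Finset (Fin d), IsMaxChain S.le (t : Set (Fin d)) →
      ∑ j ∈ t, tmap S.lt v j ≤ m) := by
  constructor
  · intro hvm t ht
    exact sum_tmap_le_of_chain ρ S hS hm hvm t ht.isChain
  · exact le_of_maxchain_sums ρ S hS hv0 hvc

lemma mem_maxChain (i : Fin d) :
    ∃ t : Finset (Fin d), IsMaxChain S.le (t : Set (Fin d)) ∧ i ∈ t := by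
  obtain ⟨t, ht, hsub⟩ := exists_maxChain_finset S {i} (by
    simp only [Finset.coe_singleton]; exact Set.Subsingleton.isChain (by simp))
  exact ⟨t, ht, hsub (Finset.mem_singleton_self i)⟩

end Chains
section SideDef
variable {d : ℕ}

structure Side (d : ℕ) (ρ : Fin d → ℕ) where
  lt : Fin d → Fin d → Prop
  hlt : ∀ i j, lt i j → ρ i < ρ j
  poly : Set (Fin d → ℝ)
  UB : ℝ → (Fin d → ℝ) → Prop
  UBZ : ℤ → (Fin d → ℤ) → Prop
  mem_iff : ∀ x, x ∈ poly ↔ (∀ i, 0 ≤ x i) ∧ (∀ i j, lt i j → x j ≤ x i) ∧ UB 1 x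
  ub_mono : ∀ (s : ℝ) (x y : Fin d → ℝ), (∀ i, x i ≤ y i) → UB s y → UB s x
  ub_smul : ∀ (s : ℝ) (x : Fin d → ℝ), 0 ≤ s → UB 1 x → UB s (fun i => s * x i)
  ub_div : ∀ (s : ℝ) (x : Fin d → ℝ), 0 < s → UB s x → UB 1 (fun i => s⁻¹ * x i)
  ub_cast : ∀ (s : ℝ) (u : Fin d → ℤ), UB s (fun i => (u i : ℝ)) ↔ UBZ ⌊s⌋ u
  ubz_zero : ∀ (u : Fin d → ℤ), (∀ i, 0 ≤ u i) → UBZ 0 u → ∀ i, u i = 0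
  ub_zero_one : UB 1 (fun _ => 0)
  convex : Convex ℝ poly

variable (ρ : Fin d → ℕ)

/-- the order-polytope side -/
noncomputable def sideO (R : PartialOrder (Fin d)) (hR : ∀ i j, R.lt i j → ρ i < ρ j) :
    Side d ρ where
  lt := R.lt
  hlt := hR
  poly := orderPolytope R.le
  UB s x := ∀ i, x i ≤ s
  UBZ m u := ∀ i, u i ≤ m
  mem_iff := by
    intro x
    constructor
    · rintro ⟨h1, h2⟩
      exact ⟨fun i => (h1 i).1, fun i j hij => h2 i j hij.le, fun i => (h1 i).2⟩
    · rintro ⟨h1, h2, h3⟩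
      refine ⟨fun i => ⟨h1 i, h3 i⟩, fun i j hij => ?_⟩
      rcases eq_or_ne i j with rfl | hne
      · exact le_rfl
      · exact h2 i j ((R.lt_iff_le_not_ge i j).mpr
          ⟨hij, fun h' => hne (R.le_antisymm _ _ hij h')⟩)
  ub_mono := fun s x y hxy hy i => (hxy i).trans (hy i)
  ub_smul := fun s x hs h1 i => by
    calc s * x i ≤ s * 1 := by nlinarith [h1 i]
      _ = s := mul_one s
  ub_div := fun s x hs h i => by
    rw [inv_mul_le_iff₀ hs, mul_one]; exact h i
  ub_cast := fun s u => by
    constructor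
    · intro h i; exact Int.le_floor.mpr (h i)
    · intro h i; exact Int.le_floor.mp (h i)
  ubz_zero := fun u h0 hub i => le_antisymm (hub i) (h0 i)
  ub_zero_one := fun i => zero_le_one
  convex := by
    intro x hx y hy θ μ hθ hμ hsum
    obtain ⟨hx1, hx2⟩ := hx
    obtain ⟨hy1, hy2⟩ := hy
    constructor
    · intro i
      have h1 := (hx1 i).1; have h2 := (hx1 i).2
      have h3 := (hy1 i).1; have h4 := (hy1 i).2
      constructor
      · have : (θ • x + μ • y) i = θ * x i + μ * y i := rfl
        rw [this]; nlinarith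
      · have : (θ • x + μ • y) i = θ * x i + μ * y i := rfl
        rw [this]; nlinarith
    · intro i j hij
      have h1 := hx2 i j hij
      have h2 := hy2 i j hij
      have e1 : (θ • x + μ • y) i = θ * x i + μ * y i := rfl
      have e2 : (θ • x + μ • y) j = θ * x j + μ * y j := rfl
      rw [e1, e2]; nlinarith

/-- the chain-polytope side -/
noncomputable def sideC (S : PartialOrder (Fin d)) : Side d ρ where
  lt := fun _ _ => False
  hlt := fun i j h => h.elim
  poly := chainPolytope S.le
  UB s x := ∀ c : Finset (Fin d), IsMaxChain S.le (c : Set (Fin d)) → ∑ i ∈ c, x i ≤ s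
  UBZ m u := ∀ c : Finset (Fin d), IsMaxChain S.le (c : Set (Fin d)) → ∑ i ∈ c, u i ≤ m
  mem_iff := by
    intro x
    constructor
    · rintro ⟨h1, h2⟩
      exact ⟨h1, fun i j h => h.elim, h2⟩
    · rintro ⟨h1, _, h3⟩
      exact ⟨h1, h3⟩
  ub_mono := fun s x y hxy hy c hc => (Finset.sum_le_sum fun i _ => hxy i).trans (hy c hc)
  ub_smul := fun s x hs h1 c hc => by
    rw [← Finset.mul_sum]
    calc s * ∑ i ∈ c, x i ≤ s * 1 := by nlinarith [h1 c hc]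
      _ = s := mul_one s
  ub_div := fun s x hs h c hc => by
    rw [← Finset.mul_sum, inv_mul_le_iff₀ hs, mul_one]; exact h c hc
  ub_cast := fun s u => by
    constructor
    · intro h c hc
      apply Int.le_floor.mpr
      push_cast
      exact h c hc
    · intro h c hc
      have := Int.le_floor.mp (h c hc)
      push_cast at this
      exact this
  ubz_zero := fun u h0 hub i => by
    obtain ⟨t, ht, hit⟩ := mem_maxChain S i
    have h1 : u i ≤ ∑ j ∈ t, u j :=
      Finset.single_le_sum (fun j _ => h0 j) hit
    have h2 := hub t ht
    have h3 := h0 i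
    omega
  ub_zero_one := fun c hc => by simp
  convex := by
    intro x hx y hy θ μ hθ hμ hsum
    obtain ⟨hx1, hx2⟩ := hx
    obtain ⟨hy1, hy2⟩ := hy
    constructor
    · intro i
      have h1 := hx1 i; have h3 := hy1 i
      have : (θ • x + μ • y) i = θ * x i + μ * y i := rfl
      rw [this]; nlinarith
    · intro c hc
      have h2 := hx2 c hc
      have h4 := hy2 c hc
      have : ∑ i ∈ c, (θ • x + μ • y) i = θ * ∑ i ∈ c, x i + μ * ∑ i ∈ c, y i := by
        rw [Finset.mul_sum, Finset.mul_sum, ← Finset.sum_add_distrib]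
        rfl
      rw [this]; nlinarith

end SideDef
section Snoc
variable {d : ℕ}

lemma convex_image_snoc {A : Set (Fin d → ℝ)} (hA : Convex ℝ A) (e : ℝ) (c : ℝ)
    (he : e = 1 ∨ e = -1) :
    Convex ℝ ((fun x : Fin d → ℝ => (Fin.snoc (fun i => e * x i) c : Fin (d+1) → ℝ)) '' A) := by
  rintro _ ⟨a, ha, rfl⟩ _ ⟨b, hb, rfl⟩ θ μ hθ hμ hsum
  refine ⟨θ • a + μ • b, hA ha hb hθ hμ hsum, ?_⟩
  funext i
  refine Fin.lastCases ?_ (fun j => ?_) i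
  · simp only [Fin.snoc_last, Pi.add_apply, Pi.smul_apply, smul_eq_mul]
    rw [← add_mul, hsum, one_mul]
  · simp only [Fin.snoc_castSucc, Pi.add_apply, Pi.smul_apply, smul_eq_mul]
    ring

lemma image_snoc_one (A : Set (Fin d → ℝ)) :
    ((fun x => Fin.snoc x (1 : ℝ)) '' A) =
      ((fun x : Fin d → ℝ => (Fin.snoc (fun i => (1:ℝ) * x i) (1:ℝ) : Fin (d+1) → ℝ)) '' A) := by
  apply Set.image_congr
  intro a _
  simp only [one_mul]

lemma image_snoc_neg (B : Set (Fin d → ℝ)) :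
    ((fun x => Fin.snoc (-x) (-1 : ℝ)) '' B) =
      ((fun x : Fin d → ℝ => (Fin.snoc (fun i => (-1:ℝ) * x i) (-1:ℝ) : Fin (d+1) → ℝ)) '' B) := by
  apply Set.image_congr
  intro a _
  simp only [neg_one_mul]
  rfl

end Snoc
section MemOmega
variable {d : ℕ} (ρ : Fin d → ℕ)

noncomputable def mfl (n : ℕ) (k : ℤ) : ℤ := ⌊((n : ℝ) + k) / 2⌋

lemma zero_mem_poly (SA : Side d ρ) : (fun _ => (0:ℝ)) ∈ SA.poly :=
  (SA.mem_iff _).mpr ⟨fun _ => le_rfl, fun _ _ _ => le_rfl, SA.ub_zero_one⟩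

lemma exists_scale (SA : Side d ρ) {s : ℝ} (hs : 0 ≤ s) (u : Fin d → ℤ)
    (hu0 : ∀ i, 0 ≤ u i) (huc : ∀ i j, SA.lt i j → u j ≤ u i)
    (hub : SA.UBZ ⌊s⌋ u) : ∃ a', a' ∈ SA.poly ∧ ∀ i, s * a' i = (u i : ℝ) := by
  rcases eq_or_lt_of_le hs with heq | hlt
  · have h0 : ⌊s⌋ = 0 := by rw [← heq]; simp
    have hz := SA.ubz_zero u hu0 (h0 ▸ hub)
    exact ⟨fun _ => 0, zero_mem_poly ρ SA, fun i => by rw [hz i]; simp⟩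
  · refine ⟨fun i => s⁻¹ * (u i : ℝ), (SA.mem_iff _).mpr ⟨?_, ?_, ?_⟩, ?_⟩
    · intro i
      exact mul_nonneg (inv_nonneg.mpr hs) (by exact_mod_cast hu0 i)
    · intro i j h
      exact mul_le_mul_of_nonneg_left (by exact_mod_cast huc i j h) (inv_nonneg.mpr hs)
    · exact SA.ub_div s _ hlt ((SA.ub_cast s u).mpr hub)
    · intro i
      field_simp

set_option maxHeartbeats 1000000 in
lemma mem_omega_iff (SA SB : Side d ρ) (n : ℕ) (hn : 1 ≤ n) (a : Fin (d+1) → ℤ) :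
    ((fun i => (a i : ℝ)) ∈ (n : ℝ) • OmegaPoly SA.poly SB.poly) ↔
      (|a (Fin.last d)| ≤ (n : ℤ) ∧
        SB.UBZ (mfl n (-(a (Fin.last d))))
          (vcan ρ SA.lt SB.lt SA.hlt SB.hlt (fun j => a j.castSucc)) ∧
        SA.UBZ (mfl n (a (Fin.last d)))
          (fun j => a j.castSucc +
            vcan ρ SA.lt SB.lt SA.hlt SB.hlt (fun j => a j.castSucc) j)) := by
  have hn0 : (0:ℝ) < n := by exact_mod_cast hn
  set k : ℤ := a (Fin.last d) with hk
  set y : Fin d → ℤ := fun j => a j.castSucc with hy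
  set v : Fin d → ℤ := vcan ρ SA.lt SB.lt SA.hlt SB.hlt y with hv
  have hv0 : ∀ i, 0 ≤ v i := vcan_nonneg ρ SA.hlt SB.hlt y
  have hvS : ∀ i j, SB.lt i j → v j ≤ v i := fun i j h => vcan_coneS ρ SA.hlt SB.hlt y h
  have hu0 : ∀ i, 0 ≤ y i + v i := fun i => by
    have h1 := vcan_ge_neg ρ SA.hlt SB.hlt y i
    rw [← hv] at h1; omega
  have huR : ∀ i j, SA.lt i j → y j + v j ≤ y i + v i := fun i j h => by
    have h1 := vcan_coneR ρ SA.hlt SB.hlt y h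
    rw [← hv] at h1; omega
  constructor
  · intro h
    obtain ⟨z, hz, hza⟩ := Set.mem_smul_set.mp h
    have hApne : SA.poly.Nonempty := ⟨_, zero_mem_poly ρ SA⟩
    have hBpne : SB.poly.Nonempty := ⟨_, zero_mem_poly ρ SB⟩
    have hAne : ((fun x : Fin d → ℝ =>
        (Fin.snoc x (1:ℝ) : Fin (d+1) → ℝ)) '' SA.poly).Nonempty :=
      Set.Nonempty.image _ hApne
    have hBne : ((fun x : Fin d → ℝ =>
        (Fin.snoc (-x) (-1:ℝ) : Fin (d+1) → ℝ)) '' SB.poly).Nonempty :=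
      Set.Nonempty.image _ hBpne
    rw [OmegaPoly, convexHull_union hAne hBne,
      Convex.convexHull_eq (by
        rw [image_snoc_one]
        exact convex_image_snoc SA.convex 1 1 (Or.inl rfl)),
      Convex.convexHull_eq (by
        rw [image_snoc_neg]
        exact convex_image_snoc SB.convex (-1) (-1) (Or.inr rfl)),
      mem_convexJoin] at hz
    obtain ⟨p, hp, q, hq, hpq⟩ := hz
    obtain ⟨a', ha', rfl⟩ := hp
    obtain ⟨b', hb', rfl⟩ := hq
    obtain ⟨θ, μ, hθ, hμ, hθμ, hcomb⟩ := hpq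
    set s : ℝ := n * θ with hs
    set s' : ℝ := n * μ with hs'
    have hs0 : 0 ≤ s := mul_nonneg hn0.le hθ
    have hs'0 : 0 ≤ s' := mul_nonneg hn0.le hμ
    have hssum : s + s' = n := by rw [hs, hs', ← mul_add, hθμ, mul_one]
    -- last coordinate
    have hkr : (k : ℝ) = s - s' := by
      have h1 := congrFun hcomb (Fin.last d)
      have h2 := congrFun hza (Fin.last d)
      simp only [Pi.add_apply, Pi.smul_apply, smul_eq_mul, Fin.snoc_last] at h1
      simp only [Pi.smul_apply, smul_eq_mul] at h2
      rw [← h1] at h2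
      rw [hk, ← h2, hs, hs']
      ring
    -- first coordinates
    have hyr : ∀ j : Fin d, (y j : ℝ) = s * a' j - s' * b' j := by
      intro j
      have h1 := congrFun hcomb (Fin.castSucc j)
      have h2 := congrFun hza (Fin.castSucc j)
      simp only [Pi.add_apply, Pi.smul_apply, smul_eq_mul, Fin.snoc_castSucc,
        Pi.neg_apply] at h1
      simp only [Pi.smul_apply, smul_eq_mul] at h2
      rw [← h1] at h2
      rw [hy, ← h2, hs, hs']
      ring
    have habs : |k| ≤ (n : ℤ) := by
      have : |(k:ℝ)| ≤ (n:ℝ) := abs_le.mpr ⟨by linarith, by linarith⟩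
      exact_mod_cast this
    obtain ⟨ha'0, ha'c, ha'u⟩ := (SA.mem_iff a').mp ha'
    obtain ⟨hb'0, hb'c, hb'u⟩ := (SB.mem_iff b').mp hb'
    set w : Fin d → ℝ := fun i => s' * b' i with hw
    have hw0 : ∀ i, 0 ≤ w i := fun i => mul_nonneg hs'0 (hb'0 i)
    have hyweq : ∀ i, (y i : ℝ) + w i = s * a' i := fun i => by
      rw [hw, hyr i]; ring
    have hvw : ∀ i, (v i : ℝ) ≤ w i := by
      apply vcan_min ρ SA.hlt SB.hlt y w hw0
      · intro i j hij
        exact mul_le_mul_of_nonneg_left (hb'c i j hij) hs'0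
      · intro i
        rw [hyweq i]
        exact mul_nonneg hs0 (ha'0 i)
      · intro i j hij
        rw [hyweq i, hyweq j]
        exact mul_le_mul_of_nonneg_left (ha'c i j hij) hs0
    refine ⟨habs, ?_, ?_⟩
    · have hB2 : SB.UB s' (fun i => (v i : ℝ)) :=
        SB.ub_mono s' _ _ hvw (SB.ub_smul s' b' hs'0 hb'u)
      have hB3 : SB.UBZ ⌊s'⌋ v := (SB.ub_cast s' v).mp hB2
      have : ⌊s'⌋ = mfl n (-k) := by
        rw [mfl]
        congr 1
        push_cast
        linarith
      rwa [this] at hB3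
    · have hA2 : SA.UB s (fun i => ((y i + v i : ℤ) : ℝ)) := by
        apply SA.ub_mono s _ _ _ (SA.ub_smul s a' hs0 ha'u)
        intro i
        push_cast
        rw [← hyweq i]
        have := hvw i
        linarith
      have hA3 : SA.UBZ ⌊s⌋ (fun i => y i + v i) := (SA.ub_cast s _).mp hA2
      have : ⌊s⌋ = mfl n k := by
        rw [mfl]
        congr 1
        push_cast
        linarith
      rwa [this] at hA3
  · rintro ⟨habs, hB, hA⟩
    set s : ℝ := ((n:ℝ) + k) / 2 with hs
    set s' : ℝ := ((n:ℝ) - k) / 2 with hs'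
    have habs' : |(k:ℝ)| ≤ (n:ℝ) := by exact_mod_cast habs
    obtain ⟨hk1, hk2⟩ := abs_le.mp habs'
    have hs0 : 0 ≤ s := by rw [hs]; linarith
    have hs'0 : 0 ≤ s' := by rw [hs']; linarith
    have hflA : ⌊s⌋ = mfl n k := by rw [mfl]
    have hflB : ⌊s'⌋ = mfl n (-k) := by
      rw [mfl]
      congr 1
      push_cast
      ring
    obtain ⟨a', ha', hsu⟩ := exists_scale ρ SA hs0 (fun i => y i + v i) hu0 huR
      (by rw [hflA]; exact hA)
    obtain ⟨b', hb', hsv⟩ := exists_scale ρ SB hs'0 v hv0 hvS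
      (by rw [hflB]; exact hB)
    set θ : ℝ := s / n with hθ
    have hθ0 : 0 ≤ θ := div_nonneg hs0 hn0.le
    have hθ1 : θ ≤ 1 := by
      rw [hθ, div_le_one hn0]
      rw [hs]; linarith
    set z : Fin (d+1) → ℝ :=
      θ • (Fin.snoc a' (1:ℝ) : Fin (d+1) → ℝ) +
        (1 - θ) • (Fin.snoc (-b') (-1:ℝ) : Fin (d+1) → ℝ) with hz
    have hzmem : z ∈ OmegaPoly SA.poly SB.poly := by
      have hpA : (Fin.snoc a' (1:ℝ) : Fin (d+1) → ℝ) ∈ ((fun x : Fin d → ℝ =>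
          (Fin.snoc x (1:ℝ) : Fin (d+1) → ℝ)) '' SA.poly) :=
        Set.mem_image_of_mem _ ha'
      have hpB : (Fin.snoc (-b') (-1:ℝ) : Fin (d+1) → ℝ) ∈ ((fun x : Fin d → ℝ =>
          (Fin.snoc (-x) (-1:ℝ) : Fin (d+1) → ℝ)) '' SB.poly) :=
        Set.mem_image_of_mem _ hb'
      exact (convex_convexHull ℝ _)
        (subset_convexHull ℝ _ (Set.mem_union_left _ hpA))
        (subset_convexHull ℝ _ (Set.mem_union_right _ hpB))
        hθ0 (by linarith) (by ring)
    refine Set.mem_smul_set.mpr ⟨z, hzmem, ?_⟩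
    have hnθ : (n:ℝ) * θ = s := by
      rw [hθ]; field_simp
    have hnθ' : (n:ℝ) * (1 - θ) = s' := by
      rw [hθ]; field_simp; rw [hs, hs']; ring
    funext i
    refine Fin.lastCases ?_ (fun j => ?_) i
    · simp only [Pi.smul_apply, smul_eq_mul, hz, Pi.add_apply, Fin.snoc_last]
      rw [← hk]
      have hks : (k:ℝ) = s - s' := by rw [hs, hs']; ring
      nlinarith [hnθ, hnθ', hks]
    · simp only [Pi.smul_apply, smul_eq_mul, hz, Pi.add_apply, Fin.snoc_castSucc,
        Pi.neg_apply]
      have h1 : (n:ℝ) * (θ * a' j + (1 - θ) * (-(b' j))) = s * a' j - s' * b' j := by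
        rw [← hnθ, ← hnθ']; ring
      rw [mul_add] at h1 ⊢
      rw [show (n:ℝ) * (θ * a' j) + n * ((1-θ) * (-(b' j))) = s * a' j - s' * b' j from h1]
      rw [hsu j, hsv j]
      have : y j = a (Fin.castSucc j) := by rw [hy]
      push_cast
      rw [← this]
      push_cast
      ring
end MemOmega
section TB
variable {d : ℕ} (ρ : Fin d → ℕ) {rlt slt : Fin d → Fin d → Prop}
  (hR : ∀ i j, rlt i j → ρ i < ρ j) (hS : ∀ i j, slt i j → ρ i < ρ j)

lemma TB1 (y : Fin d → ℤ) : ∀ i, tmap slt (vcan ρ rlt slt hR hS y) i =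
    vcan ρ rlt (fun _ _ => False) hR (fun _ _ h => h.elim)
      (fun i' => y i' + vcan ρ rlt slt hR hS y i' - tmap slt (vcan ρ rlt slt hR hS y) i') i := by
  set v : Fin d → ℤ := vcan ρ rlt slt hR hS y with hv
  set T : Fin d → ℤ := tmap slt v with hT
  set y' : Fin d → ℤ := fun i' => y i' + v i' - T i' with hy'
  have hv0 : ∀ i, 0 ≤ v i := fun i => by rw [hv]; exact vcan_nonneg ρ hR hS y i
  have hvy : ∀ i, -(y i) ≤ v i := fun i => by rw [hv]; exact vcan_ge_neg ρ hR hS y i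
  have hvS : ∀ i j, slt i j → v j ≤ v i := fun i j h => by
    rw [hv]; exact vcan_coneS ρ hR hS y h
  have hvR : ∀ i j, rlt i j → y j + v j - y i ≤ v i := fun i j h => by
    rw [hv]; exact vcan_coneR ρ hR hS y h
  have hTi : ∀ i, T i = v i - fmax (aboveSet slt i) v := fun i => by rw [hT]; rfl
  have hT0 : ∀ i, 0 ≤ T i := fun i => by rw [hT]; exact tmap_nonneg hv0 hvS i
  have hTle : ∀ i, T i ≤ v i := fun i => by rw [hT]; exact tmap_le i
  have hy'i : ∀ i, y' i = y i + v i - T i := fun i => by rw [hy']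
  apply vcan_unique ρ hR (fun _ _ h => h.elim) y' T hT0
  · intro i
    have := hvy i; have := hy'i i; have := hTle i
    omega
  · intro i j h
    exact h.elim
  · intro i j h
    have h1 := hvR i j h
    have := hy'i i; have := hy'i j
    omega
  · intro i
    rcases vcan_tight ρ hR hS y i with h | h | ⟨j, hj, h⟩ | ⟨j, hj, h⟩
    all_goals rw [← hv] at h
    · left
      have := hT0 i; have := hTle i
      omega
    · right; left
      have := hy'i i; have := hTi i
      omega
    · left
      have hfm : v j ≤ fmax (aboveSet slt i) v := le_fmax _ (mem_aboveSet.mpr hj)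
      have := hTi i; have := hT0 i
      omega
    · right; right; right
      refine ⟨j, hj, ?_⟩
      have := hy'i i; have := hy'i j
      omega

lemma TB2 (y' : Fin d → ℤ) :
    ∀ i, rmap ρ slt hS (vcan ρ rlt (fun _ _ => False) hR (fun _ _ h => h.elim) y') i =
      vcan ρ rlt slt hR hS
        (fun i' => y' i' + vcan ρ rlt (fun _ _ => False) hR (fun _ _ h => h.elim) y' i' -
          rmap ρ slt hS (vcan ρ rlt (fun _ _ => False) hR (fun _ _ h => h.elim) y') i') i := by
  set w : Fin d → ℤ := vcan ρ rlt (fun _ _ => False) hR (fun _ _ h => h.elim) y' with hw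
  set r : Fin d → ℤ := rmap ρ slt hS w with hr
  set y : Fin d → ℤ := fun i' => y' i' + w i' - r i' with hy
  have hw0 : ∀ i, 0 ≤ w i := fun i => by rw [hw]; exact vcan_nonneg ρ hR _ y' i
  have hwy : ∀ i, -(y' i) ≤ w i := fun i => by rw [hw]; exact vcan_ge_neg ρ hR _ y' i
  have hwR : ∀ i j, rlt i j → y' j + w j - y' i ≤ w i := fun i j h => by
    rw [hw]; exact vcan_coneR ρ hR _ y' h
  have hr0 : ∀ i, 0 ≤ r i := fun i => by rw [hr]; exact rmap_nonneg ρ hS hw0 i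
  have hrS : ∀ i j, slt i j → r j ≤ r i := fun i j h => by
    rw [hr]; exact rmap_cone ρ hS hw0 h
  have hri : ∀ i, r i = w i + fmax (aboveSet slt i) r := fun i => by
    rw [hr]; rw [rmap_eq]
  have hyi : ∀ i, y i = y' i + w i - r i := fun i => by rw [hy]
  apply vcan_unique ρ hR hS y r hr0
  · intro i
    have := hwy i; have := hyi i
    omega
  · intro i j h
    exact hrS i j h
  · intro i j h
    have := hwR i j h; have := hyi i; have := hyi j
    omega
  · intro i
    rcases vcan_tight ρ hR (fun _ _ (h : False) => h.elim) y' i with h | h | ⟨j, hj, h⟩ | ⟨j, hj, h⟩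
    · rw [← hw] at h
      rcases fmax_cases (aboveSet slt i) r with h2 | ⟨j, hj2, h2⟩
      · left
        have := hri i
        omega
      · right; right; left
        exact ⟨j, mem_aboveSet.mp hj2, by have := hri i; omega⟩
    · rw [← hw] at h
      right; left
      have := hyi i
      omega
    · exact hj.elim
    · rw [← hw] at h
      right; right; right
      refine ⟨j, hj, ?_⟩
      have := hyi i; have := hyi j
      have hww : y' j + w j = y' i + w i := by omega
      omega

lemma TB3 (y' : Fin d → ℤ) :
    ∀ i, vcan ρ rlt (fun _ _ => False) hR (fun _ _ h => h.elim) y' i =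
      vcan ρ (fun _ _ => False) (fun _ _ => False) (fun _ _ h => h.elim) (fun _ _ h => h.elim)
        (fun i' => tmap rlt (fun i'' => y' i'' + vcan ρ rlt (fun _ _ => False) hR (fun _ _ h => h.elim) y' i'') i' -
          vcan ρ rlt (fun _ _ => False) hR (fun _ _ h => h.elim) y' i') i := by
  set w : Fin d → ℤ := vcan ρ rlt (fun _ _ => False) hR (fun _ _ h => h.elim) y' with hw
  set u : Fin d → ℤ := fun i'' => y' i'' + w i'' with hu
  set y'' : Fin d → ℤ := fun i' => tmap rlt u i' - w i' with hy''
  have hw0 : ∀ i, 0 ≤ w i := fun i => by rw [hw]; exact vcan_nonneg ρ hR _ y' i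
  have hwy : ∀ i, -(y' i) ≤ w i := fun i => by rw [hw]; exact vcan_ge_neg ρ hR _ y' i
  have hwR : ∀ i j, rlt i j → y' j + w j - y' i ≤ w i := fun i j h => by
    rw [hw]; exact vcan_coneR ρ hR _ y' h
  have hui : ∀ i, u i = y' i + w i := fun i => by rw [hu]
  have hu0 : ∀ i, 0 ≤ u i := fun i => by have := hwy i; have := hui i; omega
  have huR : ∀ i j, rlt i j → u j ≤ u i := fun i j h => by
    have := hwR i j h; have := hui i; have := hui j; omega
  have hT0 : ∀ i, 0 ≤ tmap rlt u i := fun i => tmap_nonneg hu0 huR i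
  have hTle : ∀ i, tmap rlt u i ≤ u i := fun i => tmap_le i
  have hTi : ∀ i, tmap rlt u i = u i - fmax (aboveSet rlt i) u := fun i => rfl
  have hy''i : ∀ i, y'' i = tmap rlt u i - w i := fun i => by rw [hy'']
  apply vcan_unique ρ (fun _ _ h => h.elim) (fun _ _ h => h.elim) y'' w hw0
  · intro i
    have := hT0 i; have := hy''i i
    omega
  · intro i j h
    exact h.elim
  · intro i j h
    exact h.elim
  · intro i
    rcases vcan_tight ρ hR (fun _ _ (h : False) => h.elim) y' i with h | h | ⟨j, hj, h⟩ | ⟨j, hj, h⟩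
    · rw [← hw] at h
      exact Or.inl h
    · rw [← hw] at h
      right; left
      have h2 : u i = 0 := by have := hui i; omega
      have := hTle i; have := hT0 i; have := hy''i i
      omega
    · exact hj.elim
    · rw [← hw] at h
      right; left
      have h2 : u i = u j := by have := hui i; have := hui j; omega
      have hfm : u j ≤ fmax (aboveSet rlt i) u := le_fmax _ (mem_aboveSet.mpr hj)
      have := hTi i; have := hT0 i; have := hy''i i
      omega

lemma TB4 (y'' : Fin d → ℤ) :
    ∀ i, vcan ρ (fun _ _ => False) (fun _ _ => False) (fun _ _ h => h.elim) (fun _ _ h => h.elim) y'' i =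
      vcan ρ rlt (fun _ _ => False) hR (fun _ _ h => h.elim)
        (fun i' => rmap ρ rlt hR
            (fun i'' => y'' i'' + vcan ρ (fun _ _ => False) (fun _ _ => False)
              (fun _ _ h => h.elim) (fun _ _ h => h.elim) y'' i'') i' -
          vcan ρ (fun _ _ => False) (fun _ _ => False)
            (fun _ _ h => h.elim) (fun _ _ h => h.elim) y'' i') i := by
  set w : Fin d → ℤ := vcan ρ (fun _ _ => False) (fun _ _ => False)
    (fun _ _ h => h.elim) (fun _ _ h => h.elim) y'' with hw
  set u'' : Fin d → ℤ := fun i'' => y'' i'' + w i'' with hu''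
  set u : Fin d → ℤ := rmap ρ rlt hR u'' with hu
  set y' : Fin d → ℤ := fun i' => u i' - w i' with hy'
  have hw0 : ∀ i, 0 ≤ w i := fun i => by rw [hw]; exact vcan_nonneg ρ _ _ y'' i
  have hwy : ∀ i, -(y'' i) ≤ w i := fun i => by rw [hw]; exact vcan_ge_neg ρ _ _ y'' i
  have hui'' : ∀ i, u'' i = y'' i + w i := fun i => by rw [hu'']
  have hu''0 : ∀ i, 0 ≤ u'' i := fun i => by have := hwy i; have := hui'' i; omega
  have hu0 : ∀ i, 0 ≤ u i := fun i => by rw [hu]; exact rmap_nonneg ρ hR hu''0 i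
  have huR : ∀ i j, rlt i j → u j ≤ u i := fun i j h => by
    rw [hu]; exact rmap_cone ρ hR hu''0 h
  have hui : ∀ i, u i = u'' i + fmax (aboveSet rlt i) u := fun i => by
    rw [hu]; rw [rmap_eq]
  have hy'i : ∀ i, y' i = u i - w i := fun i => by rw [hy']
  apply vcan_unique ρ hR (fun _ _ h => h.elim) y' w hw0
  · intro i
    have := hu0 i; have := hy'i i
    omega
  · intro i j h
    exact h.elim
  · intro i j h
    have := huR i j h; have := hy'i i; have := hy'i j
    omega
  · intro i
    rcases vcan_tight ρ (fun _ _ (h : False) => h.elim) (fun _ _ (h : False) => h.elim) y'' i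
      with h | h | ⟨j, hj, h⟩ | ⟨j, hj, h⟩
    · rw [← hw] at h
      exact Or.inl h
    · rw [← hw] at h
      have h2 : u'' i = 0 := by have := hui'' i; omega
      rcases fmax_cases (aboveSet rlt i) u with h3 | ⟨j, hj3, h3⟩
      · right; left
        have := hui i; have := hy'i i
        omega
      · right; right; right
        refine ⟨j, mem_aboveSet.mp hj3, ?_⟩
        have := hui i; have := hy'i i; have := hy'i j
        omega
    · exact hj.elim
    · exact hj.elim

end TB
section Glue
variable {d : ℕ}

lemma snoc_recon (a : Fin (d+1) → ℤ) :
    (Fin.snoc (fun j => a j.castSucc) (a (Fin.last d)) : Fin (d+1) → ℤ) = a := by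
  funext i
  refine Fin.lastCases ?_ (fun j => ?_) i
  · rw [Fin.snoc_last]
  · rw [Fin.snoc_castSucc]

lemma ncard_cond_eq (C1 C2 : ℤ → (Fin d → ℤ) → Prop)
    (F G : (Fin d → ℤ) → (Fin d → ℤ))
    (h1 : ∀ k y, C1 k y → C2 k (F y)) (h2 : ∀ k y, C2 k y → C1 k (G y))
    (h3 : ∀ k y, C1 k y → G (F y) = y) (h4 : ∀ k y, C2 k y → F (G y) = y) :
    Set.ncard {a : Fin (d+1) → ℤ | C1 (a (Fin.last d)) (fun j => a j.castSucc)} =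
      Set.ncard {a : Fin (d+1) → ℤ | C2 (a (Fin.last d)) (fun j => a j.castSucc)} := by
  set Φ : (Fin (d+1) → ℤ) → (Fin (d+1) → ℤ) :=
    fun a => Fin.snoc (F (fun j => a j.castSucc)) (a (Fin.last d)) with hPhi
  set Ψ : (Fin (d+1) → ℤ) → (Fin (d+1) → ℤ) :=
    fun a => Fin.snoc (G (fun j => a j.castSucc)) (a (Fin.last d)) with hPsi
  have hPl : ∀ a, (Φ a) (Fin.last d) = a (Fin.last d) := fun a => by
    rw [hPhi]; exact Fin.snoc_last _ _
  have hPc : ∀ a, (fun j => (Φ a) (Fin.castSucc j)) = F (fun j => a j.castSucc) := fun a => by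
    funext j; rw [hPhi]; exact Fin.snoc_castSucc _ _ j
  have hQl : ∀ a, (Ψ a) (Fin.last d) = a (Fin.last d) := fun a => by
    rw [hPsi]; exact Fin.snoc_last _ _
  have hQc : ∀ a, (fun j => (Ψ a) (Fin.castSucc j)) = G (fun j => a j.castSucc) := fun a => by
    funext j; rw [hPsi]; exact Fin.snoc_castSucc _ _ j
  have hPsiPhi : ∀ a : Fin (d+1) → ℤ, C1 (a (Fin.last d)) (fun j => a j.castSucc) →
      Ψ (Φ a) = a := by
    intro a ha
    show (Fin.snoc (G (fun j => (Φ a) (Fin.castSucc j))) ((Φ a) (Fin.last d)) : Fin (d+1) → ℤ) = a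
    rw [hPc a, hPl a, h3 _ _ ha]
    exact snoc_recon a
  have hPhiPsi : ∀ a : Fin (d+1) → ℤ, C2 (a (Fin.last d)) (fun j => a j.castSucc) →
      Φ (Ψ a) = a := by
    intro a ha
    show (Fin.snoc (F (fun j => (Ψ a) (Fin.castSucc j))) ((Ψ a) (Fin.last d)) : Fin (d+1) → ℤ) = a
    rw [hQc a, hQl a, h4 _ _ ha]
    exact snoc_recon a
  have himg : Φ '' {a : Fin (d+1) → ℤ | C1 (a (Fin.last d)) (fun j => a j.castSucc)} =
      {a : Fin (d+1) → ℤ | C2 (a (Fin.last d)) (fun j => a j.castSucc)} := by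
    apply Set.Subset.antisymm
    · rintro _ ⟨a, ha, rfl⟩
      show C2 ((Φ a) (Fin.last d)) (fun j => (Φ a) (Fin.castSucc j))
      rw [hPc a, hPl a]
      exact h1 _ _ ha
    · intro a ha
      refine ⟨Ψ a, ?_, hPhiPsi a ha⟩
      show C1 ((Ψ a) (Fin.last d)) (fun j => (Ψ a) (Fin.castSucc j))
      rw [hQc a, hQl a]
      exact h2 _ _ ha
  have hinj : Set.InjOn Φ {a : Fin (d+1) → ℤ | C1 (a (Fin.last d)) (fun j => a j.castSucc)} := by
    intro a1 ha1 a2 ha2 he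
    rw [← hPsiPhi a1 ha1, ← hPsiPhi a2 ha2, he]
  rw [← himg, Set.ncard_image_of_injOn hinj]

lemma mfl_nonneg (n : ℕ) (k : ℤ) (h : -(n:ℤ) ≤ k) : 0 ≤ mfl n k := by
  rw [mfl]
  apply Int.le_floor.mpr
  push_cast
  have : -(n:ℝ) ≤ (k:ℝ) := by exact_mod_cast h
  linarith

variable (ρ : Fin d → ℕ) (P Q : PartialOrder (Fin d))
  (hP' : ∀ i j, P.lt i j → ρ i < ρ j) (hQ' : ∀ i j, Q.lt i j → ρ i < ρ j) (n : ℕ)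

/-- canonical vectors for the three pairings -/
noncomputable def vOO (y : Fin d → ℤ) : Fin d → ℤ := vcan ρ P.lt Q.lt hP' hQ' y
noncomputable def vO (y : Fin d → ℤ) : Fin d → ℤ :=
  vcan ρ P.lt (fun _ _ => False) hP' (fun _ _ h => h.elim) y
noncomputable def vN (y : Fin d → ℤ) : Fin d → ℤ :=
  vcan ρ (fun _ _ => False) (fun _ _ => False) (fun _ _ h => h.elim) (fun _ _ h => h.elim) y

def C1 (k : ℤ) (y : Fin d → ℤ) : Prop :=
  |k| ≤ (n:ℤ) ∧ (∀ i, vOO ρ P Q hP' hQ' y i ≤ mfl n (-k)) ∧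
    (∀ i, y i + vOO ρ P Q hP' hQ' y i ≤ mfl n k)

def C2 (k : ℤ) (y : Fin d → ℤ) : Prop :=
  |k| ≤ (n:ℤ) ∧
    (∀ c : Finset (Fin d), IsMaxChain Q.le (c : Set (Fin d)) →
      ∑ i ∈ c, vO ρ P hP' y i ≤ mfl n (-k)) ∧
    (∀ i, y i + vO ρ P hP' y i ≤ mfl n k)

def C3 (k : ℤ) (y : Fin d → ℤ) : Prop :=
  |k| ≤ (n:ℤ) ∧
    (∀ c : Finset (Fin d), IsMaxChain Q.le (c : Set (Fin d)) →
      ∑ i ∈ c, vN ρ y i ≤ mfl n (-k)) ∧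
    (∀ c : Finset (Fin d), IsMaxChain P.le (c : Set (Fin d)) →
      ∑ i ∈ c, (y i + vN ρ y i) ≤ mfl n k)

noncomputable def F1 (y : Fin d → ℤ) : Fin d → ℤ :=
  fun i' => y i' + vcan ρ P.lt Q.lt hP' hQ' y i' - tmap Q.lt (vcan ρ P.lt Q.lt hP' hQ' y) i'
noncomputable def G1 (y : Fin d → ℤ) : Fin d → ℤ :=
  fun i' => y i' + vcan ρ P.lt (fun _ _ => False) hP' (fun _ _ h => h.elim) y i' -
    rmap ρ Q.lt hQ' (vcan ρ P.lt (fun _ _ => False) hP' (fun _ _ h => h.elim) y) i'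
noncomputable def F2 (y : Fin d → ℤ) : Fin d → ℤ :=
  fun i' => tmap P.lt (fun i'' => y i'' + vcan ρ P.lt (fun _ _ => False) hP'
      (fun _ _ h => h.elim) y i'') i' -
    vcan ρ P.lt (fun _ _ => False) hP' (fun _ _ h => h.elim) y i'
noncomputable def G2 (y : Fin d → ℤ) : Fin d → ℤ :=
  fun i' => rmap ρ P.lt hP' (fun i'' => y i'' + vcan ρ (fun _ _ => False) (fun _ _ => False)
      (fun _ _ h => h.elim) (fun _ _ h => h.elim) y i'') i' -
    vcan ρ (fun _ _ => False) (fun _ _ => False)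
      (fun _ _ h => h.elim) (fun _ _ h => h.elim) y i'

lemma hveq1 (y : Fin d → ℤ) :
    vO ρ P hP' (F1 ρ P Q hP' hQ' y) = tmap Q.lt (vOO ρ P Q hP' hQ' y) :=
  funext fun i => (TB1 ρ hP' hQ' y i).symm

lemma hveq2 (y : Fin d → ℤ) :
    vOO ρ P Q hP' hQ' (G1 ρ P Q hP' hQ' y) = rmap ρ Q.lt hQ' (vO ρ P hP' y) :=
  funext fun i => (TB2 ρ hP' hQ' y i).symm

lemma hveq3 (y : Fin d → ℤ) :
    vN ρ (F2 ρ P hP' y) = vO ρ P hP' y :=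
  funext fun i => (TB3 ρ hP' y i).symm

lemma hveq4 (y : Fin d → ℤ) :
    vO ρ P hP' (G2 ρ P hP' y) = vN ρ y :=
  funext fun i => (TB4 ρ hP' y i).symm

end Glue
section Bij
variable {d : ℕ} (ρ : Fin d → ℕ) (P Q : PartialOrder (Fin d))
  (hP' : ∀ i j, P.lt i j → ρ i < ρ j) (hQ' : ∀ i j, Q.lt i j → ρ i < ρ j) (n : ℕ)

lemma bij1_h1 : ∀ k y, C1 ρ P Q hP' hQ' n k y → C2 ρ P Q hP' n k (F1 ρ P Q hP' hQ' y) := by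
  rintro k y ⟨hk, hB, hA⟩
  obtain ⟨hk1, hk2⟩ := abs_le.mp hk
  have hm' : 0 ≤ mfl n (-k) := mfl_nonneg n (-k) (by omega)
  have hv0 : ∀ i, 0 ≤ vOO ρ P Q hP' hQ' y i := vcan_nonneg ρ hP' hQ' y
  have hvc : ∀ i j, Q.lt i j → vOO ρ P Q hP' hQ' y j ≤ vOO ρ P Q hP' hQ' y i :=
    fun i j h => vcan_coneS ρ hP' hQ' y h
  refine ⟨hk, ?_, ?_⟩
  · intro c hc
    rw [hveq1]
    exact (ub_transfer ρ Q hQ' hv0 hvc hm').mp hB c hc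
  · intro i
    have h1 := congrFun (hveq1 ρ P Q hP' hQ' y) i
    have h2 : F1 ρ P Q hP' hQ' y i =
        y i + vOO ρ P Q hP' hQ' y i - tmap Q.lt (vOO ρ P Q hP' hQ' y) i := rfl
    have := hA i
    omega

lemma bij1_h2 : ∀ k y, C2 ρ P Q hP' n k y → C1 ρ P Q hP' hQ' n k (G1 ρ P Q hP' hQ' y) := by
  rintro k y ⟨hk, hB, hA⟩
  have hw0 : ∀ i, 0 ≤ vO ρ P hP' y i := vcan_nonneg ρ hP' _ y
  have hr0 : ∀ i, 0 ≤ rmap ρ Q.lt hQ' (vO ρ P hP' y) i := rmap_nonneg ρ hQ' hw0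
  have hrc : ∀ i j, Q.lt i j →
      rmap ρ Q.lt hQ' (vO ρ P hP' y) j ≤ rmap ρ Q.lt hQ' (vO ρ P hP' y) i :=
    fun i j h => rmap_cone ρ hQ' hw0 h
  refine ⟨hk, ?_, ?_⟩
  · intro i
    rw [hveq2]
    apply le_of_maxchain_sums ρ Q hQ' hr0 hrc _ i
    intro t ht
    have he : ∑ j ∈ t, tmap Q.lt (rmap ρ Q.lt hQ' (vO ρ P hP' y)) j =
        ∑ j ∈ t, vO ρ P hP' y j :=
      Finset.sum_congr rfl (fun j _ => tmap_rmap ρ hQ' j)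
    rw [he]
    exact hB t ht
  · intro i
    have h1 := congrFun (hveq2 ρ P Q hP' hQ' y) i
    have h2 : G1 ρ P Q hP' hQ' y i =
        y i + vO ρ P hP' y i - rmap ρ Q.lt hQ' (vO ρ P hP' y) i := rfl
    have := hA i
    omega

lemma bij1_h3 : ∀ k y, C1 ρ P Q hP' hQ' n k y → G1 ρ P Q hP' hQ' (F1 ρ P Q hP' hQ' y) = y := by
  intro k y _
  have hv0 : ∀ i, 0 ≤ vOO ρ P Q hP' hQ' y i := vcan_nonneg ρ hP' hQ' y
  have hvc : ∀ i j, Q.lt i j → vOO ρ P Q hP' hQ' y j ≤ vOO ρ P Q hP' hQ' y i :=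
    fun i j h => vcan_coneS ρ hP' hQ' y h
  funext i
  have h2 : G1 ρ P Q hP' hQ' (F1 ρ P Q hP' hQ' y) i =
      F1 ρ P Q hP' hQ' y i + vO ρ P hP' (F1 ρ P Q hP' hQ' y) i -
        rmap ρ Q.lt hQ' (vO ρ P hP' (F1 ρ P Q hP' hQ' y)) i := rfl
  rw [hveq1] at h2
  have h3 : rmap ρ Q.lt hQ' (tmap Q.lt (vOO ρ P Q hP' hQ' y)) i = vOO ρ P Q hP' hQ' y i :=
    rmap_tmap ρ hQ' hv0 hvc i
  have h4 : F1 ρ P Q hP' hQ' y i =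
      y i + vOO ρ P Q hP' hQ' y i - tmap Q.lt (vOO ρ P Q hP' hQ' y) i := rfl
  omega

lemma bij1_h4 : ∀ k y, C2 ρ P Q hP' n k y → F1 ρ P Q hP' hQ' (G1 ρ P Q hP' hQ' y) = y := by
  intro k y _
  funext i
  have h2 : F1 ρ P Q hP' hQ' (G1 ρ P Q hP' hQ' y) i =
      G1 ρ P Q hP' hQ' y i + vOO ρ P Q hP' hQ' (G1 ρ P Q hP' hQ' y) i -
        tmap Q.lt (vOO ρ P Q hP' hQ' (G1 ρ P Q hP' hQ' y)) i := rfl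
  rw [hveq2] at h2
  have h3 : tmap Q.lt (rmap ρ Q.lt hQ' (vO ρ P hP' y)) i = vO ρ P hP' y i :=
    tmap_rmap ρ hQ' i
  have h4 : G1 ρ P Q hP' hQ' y i =
      y i + vO ρ P hP' y i - rmap ρ Q.lt hQ' (vO ρ P hP' y) i := rfl
  omega

lemma uO_nonneg (y : Fin d → ℤ) : ∀ i, 0 ≤ y i + vO ρ P hP' y i := fun i => by
  have := vcan_ge_neg ρ hP' (fun _ _ (h : False) => h.elim) y i
  have h2 : vO ρ P hP' y i = vcan ρ P.lt (fun _ _ => False) hP' (fun _ _ h => h.elim) y i := rfl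
  omega

lemma uO_cone (y : Fin d → ℤ) : ∀ i j, P.lt i j →
    y j + vO ρ P hP' y j ≤ y i + vO ρ P hP' y i := fun i j h => by
  have := vcan_coneR ρ hP' (fun _ _ (h : False) => h.elim) y h
  have h2 : vO ρ P hP' y i = vcan ρ P.lt (fun _ _ => False) hP' (fun _ _ h => h.elim) y i := rfl
  have h3 : vO ρ P hP' y j = vcan ρ P.lt (fun _ _ => False) hP' (fun _ _ h => h.elim) y j := rfl
  omega

lemma bij2_h1 : ∀ k y, C2 ρ P Q hP' n k y → C3 ρ P Q n k (F2 ρ P hP' y) := by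
  rintro k y ⟨hk, hB, hA⟩
  obtain ⟨hk1, hk2⟩ := abs_le.mp hk
  have hm : 0 ≤ mfl n k := mfl_nonneg n k (by omega)
  refine ⟨hk, ?_, ?_⟩
  · intro c hc
    rw [hveq3]
    exact hB c hc
  · intro c hc
    have hsum : ∑ i ∈ c, (F2 ρ P hP' y i + vN ρ (F2 ρ P hP' y) i) =
        ∑ i ∈ c, tmap P.lt (fun i'' => y i'' + vO ρ P hP' y i'') i := by
      apply Finset.sum_congr rfl
      intro i _
      have h1 := congrFun (hveq3 ρ P hP' y) i
      have h2 : F2 ρ P hP' y i =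
          tmap P.lt (fun i'' => y i'' + vO ρ P hP' y i'') i - vO ρ P hP' y i := rfl
      omega
    rw [hsum]
    exact sum_tmap_le_of_chain ρ P hP' hm hA c hc.isChain

lemma bij2_h2 : ∀ k y, C3 ρ P Q n k y → C2 ρ P Q hP' n k (G2 ρ P hP' y) := by
  rintro k y ⟨hk, hB, hA⟩
  have hu''0 : ∀ i, 0 ≤ y i + vN ρ y i := fun i => by
    have := vcan_ge_neg ρ (fun _ _ (h : False) => h.elim) (fun _ _ (h : False) => h.elim) y i
    have h2 : vN ρ y i = vcan ρ (fun _ _ => False) (fun _ _ => False)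
      (fun _ _ h => h.elim) (fun _ _ h => h.elim) y i := rfl
    omega
  have hr0 : ∀ i, 0 ≤ rmap ρ P.lt hP' (fun i'' => y i'' + vN ρ y i'') i :=
    rmap_nonneg ρ hP' hu''0
  have hrc : ∀ i j, P.lt i j →
      rmap ρ P.lt hP' (fun i'' => y i'' + vN ρ y i'') j ≤
        rmap ρ P.lt hP' (fun i'' => y i'' + vN ρ y i'') i :=
    fun i j h => rmap_cone ρ hP' hu''0 h
  refine ⟨hk, ?_, ?_⟩
  · intro c hc
    rw [hveq4]
    exact hB c hc
  · intro i
    have h1 := congrFun (hveq4 ρ P hP' y) i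
    have h2 : G2 ρ P hP' y i =
        rmap ρ P.lt hP' (fun i'' => y i'' + vN ρ y i'') i - vN ρ y i := rfl
    have h5 : rmap ρ P.lt hP' (fun i'' => y i'' + vN ρ y i'') i ≤ mfl n k := by
      apply le_of_maxchain_sums ρ P hP' hr0 hrc _ i
      intro t ht
      have he : ∑ j ∈ t, tmap P.lt (rmap ρ P.lt hP' (fun i'' => y i'' + vN ρ y i'')) j =
          ∑ j ∈ t, (y j + vN ρ y j) :=
        Finset.sum_congr rfl (fun j _ => tmap_rmap ρ hP' j)
      rw [he]
      exact hA t ht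
    omega

lemma bij2_h3 : ∀ k y, C2 ρ P Q hP' n k y → G2 ρ P hP' (F2 ρ P hP' y) = y := by
  intro k y _
  funext i
  have hfun : (fun i'' => F2 ρ P hP' y i'' + vN ρ (F2 ρ P hP' y) i'') =
      tmap P.lt (fun i'' => y i'' + vO ρ P hP' y i'') := by
    funext i''
    have h1 := congrFun (hveq3 ρ P hP' y) i''
    have h2 : F2 ρ P hP' y i'' =
        tmap P.lt (fun i'' => y i'' + vO ρ P hP' y i'') i'' - vO ρ P hP' y i'' := rfl
    omega
  have h2 : G2 ρ P hP' (F2 ρ P hP' y) i =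
      rmap ρ P.lt hP' (fun i'' => F2 ρ P hP' y i'' + vN ρ (F2 ρ P hP' y) i'') i -
        vN ρ (F2 ρ P hP' y) i := rfl
  rw [hfun, hveq3] at h2
  have h3 : rmap ρ P.lt hP' (tmap P.lt (fun i'' => y i'' + vO ρ P hP' y i'')) i =
      y i + vO ρ P hP' y i :=
    rmap_tmap ρ hP' (uO_nonneg ρ P hP' y) (uO_cone ρ P hP' y) i
  omega

lemma bij2_h4 : ∀ k y, C3 ρ P Q n k y → F2 ρ P hP' (G2 ρ P hP' y) = y := by
  intro k y _
  funext i
  have hfun : (fun i'' => G2 ρ P hP' y i'' + vO ρ P hP' (G2 ρ P hP' y) i'') =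
      rmap ρ P.lt hP' (fun i'' => y i'' + vN ρ y i'') := by
    funext i''
    have h1 := congrFun (hveq4 ρ P hP' y) i''
    have h2 : G2 ρ P hP' y i'' =
        rmap ρ P.lt hP' (fun i'' => y i'' + vN ρ y i'') i'' - vN ρ y i'' := rfl
    omega
  have h2 : F2 ρ P hP' (G2 ρ P hP' y) i =
      tmap P.lt (fun i'' => G2 ρ P hP' y i'' + vO ρ P hP' (G2 ρ P hP' y) i'') i -
        vO ρ P hP' (G2 ρ P hP' y) i := rfl
  rw [hfun, hveq4] at h2
  have h3 : tmap P.lt (rmap ρ P.lt hP' (fun i'' => y i'' + vN ρ y i'')) i =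
      y i + vN ρ y i := tmap_rmap ρ hP' i
  omega

end Bij

end OmegaProof

open OmegaProof in
set_option maxHeartbeats 1000000 in
/-- If `P` and `Q` have a common linear extension `σ`, then the Ehrhart
polynomials of `Ω(O_P, O_Q)`, `Ω(O_P, C_Q)` and `Ω(C_P, C_Q)` coincide. -/
theorem ehrhart_Omega_eq (d : ℕ) (P Q : PartialOrder (Fin d))
    (σ : Equiv.Perm (Fin d))
    (hP : ∀ a b : Fin d, P.lt (σ a) (σ b) → a < b)
    (hQ : ∀ a b : Fin d, Q.lt (σ a) (σ b) → a < b) :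
    ∀ n : ℕ, 1 ≤ n →
      ehrhart (OmegaPoly (orderPolytope P.le) (orderPolytope Q.le)) n =
        ehrhart (OmegaPoly (orderPolytope P.le) (chainPolytope Q.le)) n ∧
      ehrhart (OmegaPoly (orderPolytope P.le) (chainPolytope Q.le)) n =
        ehrhart (OmegaPoly (chainPolytope P.le) (chainPolytope Q.le)) n := by
  intro n hn
  set ρ : Fin d → ℕ := fun i => ((σ.symm i : Fin d) : ℕ) with hρ
  have hP' : ∀ i j, P.lt i j → ρ i < ρ j := by
    intro i j h
    have h2 : P.lt (σ (σ.symm i)) (σ (σ.symm j)) := by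
      rwa [Equiv.apply_symm_apply, Equiv.apply_symm_apply]
    exact hP _ _ h2
  have hQ' : ∀ i j, Q.lt i j → ρ i < ρ j := by
    intro i j h
    have h2 : Q.lt (σ (σ.symm i)) (σ (σ.symm j)) := by
      rwa [Equiv.apply_symm_apply, Equiv.apply_symm_apply]
    exact hQ _ _ h2
  have hE1 : ehrhart (OmegaPoly (orderPolytope P.le) (orderPolytope Q.le)) n =
      Set.ncard {a : Fin (d+1) → ℤ |
        C1 ρ P Q hP' hQ' n (a (Fin.last d)) (fun j => a j.castSucc)} := by
    show Set.ncard _ = _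
    congr 1
    ext a
    exact mem_omega_iff ρ (sideO ρ P hP') (sideO ρ Q hQ') n hn a
  have hE2 : ehrhart (OmegaPoly (orderPolytope P.le) (chainPolytope Q.le)) n =
      Set.ncard {a : Fin (d+1) → ℤ |
        C2 ρ P Q hP' n (a (Fin.last d)) (fun j => a j.castSucc)} := by
    show Set.ncard _ = _
    congr 1
    ext a
    exact mem_omega_iff ρ (sideO ρ P hP') (sideC ρ Q) n hn a
  have hE3 : ehrhart (OmegaPoly (chainPolytope P.le) (chainPolytope Q.le)) n =
      Set.ncard {a : Fin (d+1) → ℤ |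
        C3 ρ P Q n (a (Fin.last d)) (fun j => a j.castSucc)} := by
    show Set.ncard _ = _
    congr 1
    ext a
    exact mem_omega_iff ρ (sideC ρ P) (sideC ρ Q) n hn a
  constructor
  · rw [hE1, hE2]
    exact ncard_cond_eq (C1 ρ P Q hP' hQ' n) (C2 ρ P Q hP' n)
      (F1 ρ P Q hP' hQ') (G1 ρ P Q hP' hQ')
      (bij1_h1 ρ P Q hP' hQ' n) (bij1_h2 ρ P Q hP' hQ' n)
      (bij1_h3 ρ P Q hP' hQ' n) (bij1_h4 ρ P Q hP' hQ' n)
  · rw [hE2, hE3]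
    exact ncard_cond_eq (C2 ρ P Q hP' n) (C3 ρ P Q n)
      (F2 ρ P hP') (G2 ρ P hP')
      (bij2_h1 ρ P Q hP' n) (bij2_h2 ρ P Q hP' n)
      (bij2_h3 ρ P Q hP' n) (bij2_h4 ρ P Q hP' n)
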